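/- Let p be a prime, n a natural number, and H a p-subgroup of Σ_n. Assume that for every subgroup V of order p contained in the center of H there exists an H-invariant setoid λ on Fin n with ⊥ < λ < ⊤ such that V acts transitively on the set of λ-classes. Then H is elementary abelian and H acts freely on Fin n, i.e., no non-identity element of H fixes a point of Fin n. -/

import Mathlib

/-- Let `p` be a prime and `H` a `p`-subgroup of `Σ_n`.  If for every
central subgroup `V ≤ H` of order `p` there is an `H`-invariant setoid `λ` on `Fin n`
with `⊥ < λ < ⊤` on whose classes `V` acts transitively, then `H` is elementary abelian
and acts freely on `Fin n`. -/
theorem stmt3 (p n : ℕ) (hp : p.Prime) (H : Subgroup (Equiv.Perm (Fin n)))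
    (hH : IsPGroup p H)
    (hyp : ∀ V : Subgroup (Equiv.Perm (Fin n)), V ≤ H → Nat.card V = p →
      (∀ v ∈ V, ∀ h ∈ H, v * h = h * v) →
      ∃ lam : Setoid (Fin n),
        (∀ h ∈ H, ∀ x y : Fin n, lam.r x y → lam.r (h x) (h y)) ∧
        ⊥ < lam ∧ lam < ⊤ ∧
        ∀ x y : Fin n, ∃ v ∈ V, lam.r (v x) y) :
    ((∀ a ∈ H, ∀ b ∈ H, a * b = b * a) ∧ ∀ x ∈ H, x ^ p = 1) ∧
      ∀ h ∈ H, h ≠ 1 → ∀ x : Fin n, h x ≠ x := by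
  suffices key : ∀ N : ℕ, ∀ H : Subgroup (Equiv.Perm (Fin n)), Nat.card H ≤ N →
      IsPGroup p H →
      (∀ V : Subgroup (Equiv.Perm (Fin n)), V ≤ H → Nat.card V = p →
        (∀ v ∈ V, ∀ h ∈ H, v * h = h * v) →
        ∃ lam : Setoid (Fin n),
          (∀ h ∈ H, ∀ x y : Fin n, lam.r x y → lam.r (h x) (h y)) ∧
          ⊥ < lam ∧ lam < ⊤ ∧
          ∀ x y : Fin n, ∃ v ∈ V, lam.r (v x) y) →
      ((∀ a ∈ H, ∀ b ∈ H, a * b = b * a) ∧ ∀ x ∈ H, x ^ p = 1) ∧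
        ∀ h ∈ H, h ≠ 1 → ∀ x : Fin n, h x ≠ x by
    exact key (Nat.card H) H le_rfl hH hyp
  intro N
  induction N with
  | zero =>
    intro H hcard _ _
    have : 0 < Nat.card H := Nat.card_pos
    omega
  | succ N ih =>
    intro H hcard hH hyp
    -- trivial case
    by_cases hbot : H = ⊥
    · subst hbot
      refine ⟨⟨?_, ?_⟩, ?_⟩
      · intro a ha b hb
        rw [Subgroup.mem_bot] at ha hb; subst ha; subst hb; rfl
      · intro x hx; rw [Subgroup.mem_bot] at hx; subst hx; exact one_pow p
      · intro h hh hne; rw [Subgroup.mem_bot] at hh; exact absurd hh hne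
    -- find a central element z of order p
    have hHfin : Finite H := inferInstance
    haveI hHnt : Nontrivial H := (Subgroup.nontrivial_iff_ne_bot H).mpr hbot
    haveI hfact : Fact p.Prime := ⟨hp⟩
    obtain ⟨z', hz'⟩ : ∃ g : Subgroup.center H, orderOf g = p := by
      have hc : IsPGroup p (Subgroup.center H) := hH.to_subgroup _
      haveI : Nontrivial (Subgroup.center H) := hH.center_nontrivial
      obtain ⟨k, hk⟩ := (IsPGroup.iff_card).mp hc
      have hk0 : k ≠ 0 := by
        rintro rfl
        rw [pow_zero] at hk
        have := Finite.one_lt_card_iff_nontrivial.mpr ‹Nontrivial (Subgroup.center H)›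
        omega
      have hdvd : p ∣ Nat.card (Subgroup.center H) := by
        rw [hk]; exact dvd_pow_self p hk0
      exact exists_prime_orderOf_dvd_card' p hdvd
    set z : Equiv.Perm (Fin n) := ((z' : H) : Equiv.Perm (Fin n)) with hzdef
    have hzH : z ∈ H := ((z' : H)).2
    have hzcomm : ∀ h ∈ H, z * h = h * z := by
      intro h hh
      have := z'.2
      rw [Subgroup.mem_center_iff] at this
      have := this ⟨h, hh⟩
      have := congrArg (Subgroup.subtype H) this
      simpa using this.symm
    have hzord : orderOf z = p := by
      have h1 : orderOf z = orderOf (z' : H) :=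
        orderOf_injective H.subtype (Subgroup.subtype_injective H) (z' : H)
      have h2 : orderOf ((z' : H)) = orderOf z' :=
        orderOf_injective (Subgroup.center H).subtype (Subgroup.subtype_injective _) z'
      rw [h1, h2, hz']
    have hzne : z ≠ 1 := by
      intro h
      rw [h, orderOf_one] at hzord
      exact hp.one_lt.ne' hzord.symm
    -- the subgroup V
    set V : Subgroup (Equiv.Perm (Fin n)) := Subgroup.zpowers z with hVdef
    have hVH : V ≤ H := by
      rw [hVdef, Subgroup.zpowers_le]; exact hzH
    have hVcard : Nat.card V = p := by rw [hVdef, Nat.card_zpowers, hzord]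
    have hVcomm : ∀ v ∈ V, ∀ h ∈ H, v * h = h * v := by
      rintro v hv h hh
      obtain ⟨i, rfl⟩ := hv
      exact Commute.zpow_left ((hzcomm h hh)) i
    obtain ⟨lam, hinv, hlbot, hltop, htrans⟩ := hyp V hVH hVcard hVcomm
    -- natural-power transitivity
    have hT : ∀ x y : Fin n, ∃ k : ℕ, lam.r ((z ^ k) x) y := by
      intro x y
      obtain ⟨v, hv, hr⟩ := htrans x y
      obtain ⟨k, hk⟩ := mem_powers_iff_mem_zpowers.mpr hv
      have hk' : z ^ k = v := hk
      exact ⟨k, by rwa [hk']⟩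
    -- fixing lemma
    have hfix : ∀ j : ℕ, ¬ p ∣ j → ∀ x : Fin n, ¬ lam.r ((z ^ j) x) x := by
      intro j hj x₀ hr
      set g : Equiv.Perm (Fin n) := z ^ j with hgdef
      have hgH : g ∈ H := pow_mem hzH j
      have hgord : orderOf g = p := by
        have hco : Nat.gcd p j = 1 := (Nat.Prime.coprime_iff_not_dvd hp).mpr hj
        rw [hgdef, orderOf_pow, hzord, hco, Nat.div_one]
      have hzg : z ∈ Subgroup.zpowers g := by
        have hle : Subgroup.zpowers g ≤ Subgroup.zpowers z := by
          rw [Subgroup.zpowers_le]; exact ⟨j, rfl⟩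
        have hcards : Nat.card (Subgroup.zpowers z) ≤ Nat.card (Subgroup.zpowers g) := by
          rw [Nat.card_zpowers, Nat.card_zpowers, hzord, hgord]
        have heq : Subgroup.zpowers g = Subgroup.zpowers z :=
          Subgroup.eq_of_le_of_card_ge hle hcards
        rw [heq]; exact Subgroup.mem_zpowers z
      obtain ⟨m, hm₀⟩ := mem_powers_iff_mem_zpowers.mpr hzg
      have hm : g ^ m = z := hm₀
      -- all powers of g fix the class of x₀
      have hpow : ∀ t : ℕ, lam.r ((g ^ t) x₀) x₀ := by
        intro t
        induction t with
        | zero => exact lam.refl' x₀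
        | succ t iht =>
          have h1 : lam.r (g ((g ^ t) x₀)) (g x₀) := hinv g hgH _ _ iht
          have h2 : lam.r (g x₀) x₀ := hr
          have : lam.r ((g ^ (t+1)) x₀) (g x₀) := by
            rw [pow_succ']
            simpa [Equiv.Perm.mul_apply] using h1
          exact lam.trans' this h2
      -- everything is related to x₀
      have hall : ∀ y : Fin n, lam.r y x₀ := by
        intro y
        obtain ⟨k, hk⟩ := hT x₀ y
        have : (z ^ k) x₀ = (g ^ (m * k)) x₀ := by
          rw [pow_mul, hm]
        rw [this] at hk
        exact lam.trans' (lam.symm' hk) (hpow (m * k))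
      -- lam = ⊤, contradiction
      have : (⊤ : Setoid (Fin n)) ≤ lam := by
        rw [Setoid.le_def]
        intro x y _
        exact lam.trans' (hall x) (lam.symm' (hall y))
      exact absurd this hltop.2
    -- Fin n is nonempty
    obtain ⟨x₁, y₁, hxy₁, hxyne₁⟩ : ∃ x y : Fin n, lam.r x y ∧ x ≠ y := by
      by_contra hcon
      push_neg at hcon
      have : lam ≤ ⊥ := by
        rw [Setoid.le_def]
        intro x y hxy
        by_contra hne
        exact hne (hcon x y hxy)
      exact absurd this hlbot.2
    -- subgroup K fixing all classes
    set K : Subgroup (Equiv.Perm (Fin n)) :=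
      { carrier := {h | h ∈ H ∧ ∀ x : Fin n, lam.r (h x) x}
        mul_mem' := by
          rintro a b ⟨haH, ha⟩ ⟨hbH, hb⟩
          refine ⟨mul_mem haH hbH, fun x => ?_⟩
          have h1 : lam.r (a (b x)) (b x) := ha (b x)
          exact lam.trans' (by simpa [Equiv.Perm.mul_apply] using h1) (hb x)
        one_mem' := ⟨one_mem H, fun x => lam.refl' x⟩
        inv_mem' := by
          rintro a ⟨haH, ha⟩
          refine ⟨inv_mem haH, fun x => ?_⟩
          have := ha (a⁻¹ x)
          rw [← Equiv.Perm.mul_apply, mul_inv_cancel, Equiv.Perm.one_apply] at this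
          exact lam.symm' this } with hKdef
    have hKH : K ≤ H := fun g hg => hg.1
    have hKmem : ∀ g, g ∈ K ↔ g ∈ H ∧ ∀ x : Fin n, lam.r (g x) x := fun g => Iff.rfl
    -- decomposition h = k * z^j
    have hdec : ∀ h ∈ H, ∃ k ∈ K, ∃ j : ℕ, h = k * z ^ j := by
      intro h hh
      obtain ⟨j, hj⟩ := hT x₁ (h x₁)
      refine ⟨h * (z ^ j)⁻¹, ⟨mul_mem hh (inv_mem (pow_mem hzH j)), ?_⟩, j, by group⟩
      intro x
      -- goal : lam.r ((h * (z^j)⁻¹) x) x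
      obtain ⟨i, hi⟩ := hT x₁ ((z ^ j)⁻¹ x)
      -- hi : lam.r ((z^i) x₁) ((z^j)⁻¹ x)
      have e1 : lam.r (h ((z ^ i) x₁)) (h ((z ^ j)⁻¹ x)) := hinv h hh _ _ hi
      have comm1 : h * z ^ i = z ^ i * h :=
        (hVcomm _ (Subgroup.npow_mem_zpowers z i) h hh).symm
      have e1' : lam.r ((z ^ i) (h x₁)) (h ((z ^ j)⁻¹ x)) := by
        have : h ((z ^ i) x₁) = (z ^ i) (h x₁) := by
          rw [← Equiv.Perm.mul_apply, ← Equiv.Perm.mul_apply, comm1]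
        rwa [this] at e1
      have e2 : lam.r ((z ^ i) ((z ^ j) x₁)) ((z ^ i) (h x₁)) :=
        hinv _ (pow_mem hzH i) _ _ hj
      have e3 : lam.r ((z ^ j) ((z ^ i) x₁)) ((z ^ j) ((z ^ j)⁻¹ x)) :=
        hinv _ (pow_mem hzH j) _ _ hi
      have e3' : lam.r ((z ^ i) ((z ^ j) x₁)) x := by
        have c : (z ^ j) ((z ^ i) x₁) = (z ^ i) ((z ^ j) x₁) := by
          rw [← Equiv.Perm.mul_apply, ← Equiv.Perm.mul_apply, pow_mul_comm]
        have d : (z ^ j) ((z ^ j)⁻¹ x) = x := by simp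
        rwa [c, d] at e3
      -- chain: (h * (z^j)⁻¹) x = h ((z^j)⁻¹ x) ∼ z^i (h x₁) ∼ z^i z^j x₁ ∼ x
      have final : lam.r (h ((z ^ j)⁻¹ x)) x :=
        lam.trans' (lam.symm' e1') (lam.trans' (lam.symm' e2) e3')
      simpa [Equiv.Perm.mul_apply] using final
    -- z ∉ K, so K < H
    have hzK : z ∉ K := by
      intro hzk
      exact hfix 1 (fun hd => hp.one_lt.ne' (Nat.dvd_one.mp hd)) x₁
        (by simpa using hzk.2 x₁)
    have hKlt : Nat.card K < Nat.card H := by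
      have hsub : (K : Set (Equiv.Perm (Fin n))) ⊂ (H : Set (Equiv.Perm (Fin n))) :=
        ⟨hKH, fun hle => hzK (hle hzH)⟩
      have e1 : Nat.card K = (K : Set (Equiv.Perm (Fin n))).ncard :=
        Nat.card_coe_set_eq _
      have e2 : Nat.card H = (H : Set (Equiv.Perm (Fin n))).ncard :=
        Nat.card_coe_set_eq _
      rw [e1, e2]
      exact Set.ncard_lt_ncard hsub (Set.toFinite _)
    -- apply induction hypothesis to K
    have hKp : IsPGroup p K := hH.to_le hKH
    have hKhyp : ∀ W : Subgroup (Equiv.Perm (Fin n)), W ≤ K → Nat.card W = p →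
        (∀ w ∈ W, ∀ k ∈ K, w * k = k * w) →
        ∃ lam : Setoid (Fin n),
          (∀ h ∈ K, ∀ x y : Fin n, lam.r x y → lam.r (h x) (h y)) ∧
          ⊥ < lam ∧ lam < ⊤ ∧
          ∀ x y : Fin n, ∃ v ∈ W, lam.r (v x) y := by
      intro W hWK hWcard hWcomm
      have hWH : W ≤ H := hWK.trans hKH
      have hWcommH : ∀ w ∈ W, ∀ h ∈ H, w * h = h * w := by
        intro w hw h hh
        obtain ⟨k, hk, j, rfl⟩ := hdec h hh
        have c1 : w * k = k * w := hWcomm w hw k hk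
        have c2 : w * z ^ j = z ^ j * w :=
          (hVcomm _ (Subgroup.npow_mem_zpowers z j) w (hWH hw)).symm
        calc w * (k * z ^ j) = k * w * z ^ j := by rw [← mul_assoc, c1]
          _ = k * (z ^ j * w) := by rw [mul_assoc, c2]
          _ = k * z ^ j * w := by rw [mul_assoc]
      obtain ⟨lam', h1, h2, h3, h4⟩ := hyp W hWH hWcard hWcommH
      exact ⟨lam', fun h hh => h1 h (hKH hh), h2, h3, h4⟩
    obtain ⟨⟨hKab, hKpow⟩, hKfree⟩ := ih K (by omega) hKp hKhyp
    -- assemble conclusions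
    refine ⟨⟨?_, ?_⟩, ?_⟩
    · -- commutativity
      intro a ha b hb
      obtain ⟨k₁, hk₁, i, rfl⟩ := hdec a ha
      obtain ⟨k₂, hk₂, j, rfl⟩ := hdec b hb
      have c12 : Commute k₁ k₂ := (commute_iff_eq _ _).mpr (hKab k₁ hk₁ k₂ hk₂)
      have cz1 : Commute z k₁ := (commute_iff_eq _ _).mpr (hzcomm k₁ (hKH hk₁))
      have cz2 : Commute z k₂ := (commute_iff_eq _ _).mpr (hzcomm k₂ (hKH hk₂))
      have A : Commute k₁ (k₂ * z ^ j) := c12.mul_right (cz1.symm.pow_right j)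
      have B : Commute (z ^ i) (k₂ * z ^ j) :=
        (cz2.pow_left i).mul_right (Commute.pow_pow_self z i j)
      exact (Commute.mul_left A B).eq
    · -- exponent p
      intro x hx
      obtain ⟨k, hk, j, rfl⟩ := hdec x hx
      have czk : Commute z k := (commute_iff_eq _ _).mpr (hzcomm k (hKH hk))
      have cz : Commute k (z ^ j) := czk.symm.pow_right j
      have hzp : z ^ p = 1 := by rw [← hzord]; exact pow_orderOf_eq_one z
      rw [cz.mul_pow, hKpow k hk, one_mul, ← pow_mul, mul_comm j p, pow_mul, hzp, one_pow]
    · -- freeness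
      intro h hh hne x hhx
      obtain ⟨k, hk, j, rfl⟩ := hdec h hh
      have hz' : z ^ j = z ^ (j % p) := by
        conv_lhs => rw [← pow_mod_orderOf]
        rw [hzord]
      by_cases hj : j % p = 0
      · have : (k * z ^ j) = k := by rw [hz', hj, pow_zero, mul_one]
        rw [this] at hne hhx
        exact hKfree k hk hne x hhx
      · -- lam.r ((k * z^j) x) ((z^j) x), and (k*z^j) x = x
        have hrel : lam.r ((k * z ^ j) x) ((z ^ j) x) := by
          have := hk.2 ((z ^ j) x)
          simpa [Equiv.Perm.mul_apply] using this
        rw [hhx] at hrel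
        have : lam.r ((z ^ (j % p)) x) x := by
          rw [← hz']; exact lam.symm' hrel
        exact hfix (j % p)
          (fun hd => hj (Nat.eq_zero_of_dvd_of_lt hd (Nat.mod_lt j hp.pos))) x this
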